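/- The function E(δ) := ((⌊1/δ⌋+1)δ − 1)·log₂⌊1/δ⌋ + (1 − ⌊1/δ⌋·δ)·log₂(⌊1/δ⌋+1) is concave on (0,1); in particular, on each interval [1/(s+1), 1/s] for integer s ≥ 1 it is linear, and it is continuous on (0,1). -/

import Mathlib

/-- The exponent function `E(δ)` of Byskov's bound. -/
noncomputable def Efun (δ : ℝ) : ℝ :=
  (((⌊1/δ⌋ : ℝ) + 1) * δ - 1) * Real.logb 2 (⌊1/δ⌋ : ℝ)
    + (1 - (⌊1/δ⌋ : ℝ) * δ) * Real.logb 2 ((⌊1/δ⌋ : ℝ) + 1)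

/-- The affine pieces of `Efun`. -/
noncomputable def ffun (s : ℕ) (δ : ℝ) : ℝ :=
  (((s:ℝ) + 1) * δ - 1) * Real.logb 2 (s:ℝ) + (1 - (s:ℝ) * δ) * Real.logb 2 ((s:ℝ) + 1)

lemma ffun_step (s : ℕ) (δ : ℝ) :
    ffun (s+1) δ - ffun s δ =
      (2 * Real.logb 2 ((s:ℝ)+1) - Real.logb 2 (s:ℝ) - Real.logb 2 ((s:ℝ)+2)) *
        (((s:ℝ)+1) * δ - 1) := by
  unfold ffun
  push_cast
  ring_nf

lemma C_nonneg (s : ℕ) (hs : 1 ≤ s) :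
    0 ≤ 2 * Real.logb 2 ((s:ℝ)+1) - Real.logb 2 (s:ℝ) - Real.logb 2 ((s:ℝ)+2) := by
  have hs1 : (1:ℝ) ≤ (s:ℝ) := by exact_mod_cast hs
  have h1 : Real.logb 2 (s:ℝ) + Real.logb 2 ((s:ℝ)+2)
      = Real.logb 2 ((s:ℝ) * ((s:ℝ)+2)) := by
    rw [Real.logb_mul (by linarith) (by linarith)]
  have h2 : (2:ℝ) * Real.logb 2 ((s:ℝ)+1) = Real.logb 2 (((s:ℝ)+1)^2) := by
    rw [show ((s:ℝ)+1)^2 = ((s:ℝ)+1)^(2:ℕ) by norm_num, Real.logb_pow]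
    norm_num
  have h3 : (s:ℝ) * ((s:ℝ)+2) ≤ ((s:ℝ)+1)^2 := by nlinarith
  have h4 : Real.logb 2 ((s:ℝ) * ((s:ℝ)+2)) ≤ Real.logb 2 (((s:ℝ)+1)^2) :=
    Real.logb_le_logb_of_le (by norm_num) (by nlinarith) h3
  linarith [h1 ▸ h4, h2]

lemma mono_up {s : ℕ} (hs : 1 ≤ s) {δ : ℝ} (hδ : 1/((s:ℝ)+1) ≤ δ) :
    ffun s δ ≤ ffun (s+1) δ := by
  have hpos : (0:ℝ) < (s:ℝ)+1 := by positivity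
  have h1 : 0 ≤ ((s:ℝ)+1) * δ - 1 := by
    have := (div_le_iff₀ hpos).mp hδ
    nlinarith
  have := mul_nonneg (C_nonneg s hs) h1
  linarith [ffun_step s δ]

lemma mono_down {s : ℕ} (hs : 1 ≤ s) {δ : ℝ} (hδ : δ ≤ 1/((s:ℝ)+1)) :
    ffun (s+1) δ ≤ ffun s δ := by
  have hpos : (0:ℝ) < (s:ℝ)+1 := by positivity
  have h1 : ((s:ℝ)+1) * δ - 1 ≤ 0 := by
    have := (le_div_iff₀ hpos).mp hδ
    nlinarith
  have := mul_nonpos_of_nonneg_of_nonpos (C_nonneg s hs) h1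
  linarith [ffun_step s δ]

lemma chain_up (m : ℕ) {s : ℕ} (hs : 1 ≤ s) {δ : ℝ} (hδ : 1/((s:ℝ)+1) ≤ δ) :
    ffun s δ ≤ ffun (s+m) δ := by
  induction m with
  | zero => simp
  | succ m ih =>
      refine le_trans ih ?_
      have h1 : (1:ℕ) ≤ s + m := le_trans hs (Nat.le_add_right s m)
      have h2 : 1/(((s+m:ℕ):ℝ)+1) ≤ δ := by
        refine le_trans ?_ hδ
        apply one_div_le_one_div_of_le (by positivity)
        push_cast; linarith [Nat.cast_nonneg (α := ℝ) m]
      exact mono_up h1 h2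

lemma chain_down (m : ℕ) {s : ℕ} (hs : 1 ≤ s) {δ : ℝ} (hδ : δ ≤ 1/(((s+m:ℕ):ℝ))) :
    ffun (s+m) δ ≤ ffun s δ := by
  induction m with
  | zero => simp
  | succ m ih =>
      have h1 : (1:ℕ) ≤ s + m := le_trans hs (Nat.le_add_right s m)
      have hsm : (0:ℝ) < ((s+m:ℕ):ℝ) := by exact_mod_cast Nat.lt_of_lt_of_le Nat.zero_lt_one h1
      have hδ' : δ ≤ 1/(((s+m:ℕ):ℝ)+1) := by
        refine le_trans hδ ?_
        apply le_of_eq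
        congr 1
        push_cast; ring
      have step : ffun (s+m+1) δ ≤ ffun (s+m) δ := mono_down h1 hδ'
      have hδ'' : δ ≤ 1/(((s+m:ℕ):ℝ)) := by
        refine le_trans hδ' ?_
        apply one_div_le_one_div_of_le hsm
        linarith
      exact le_trans step (ih hδ'')

lemma floor_pos_of_mem {δ : ℝ} (hδ : δ ∈ Set.Ioo (0:ℝ) 1) : 1 ≤ ⌊1/δ⌋ := by
  obtain ⟨h0, h1⟩ := hδ
  have : (1:ℝ) ≤ 1/δ := by
    rw [le_div_iff₀ h0]; linarith
  exact_mod_cast Int.le_floor.mpr (by exact_mod_cast this)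

lemma Efun_eq_ffun {δ : ℝ} (hδ : δ ∈ Set.Ioo (0:ℝ) 1) :
    Efun δ = ffun (⌊1/δ⌋.toNat) δ := by
  have h1 : ((⌊1/δ⌋.toNat : ℕ) : ℝ) = ((⌊1/δ⌋ : ℤ) : ℝ) := by
    exact_mod_cast Int.toNat_of_nonneg (by linarith [floor_pos_of_mem hδ])
  unfold Efun ffun
  rw [h1]

lemma floor_bounds {δ : ℝ} (hδ : δ ∈ Set.Ioo (0:ℝ) 1) :
    1/((⌊1/δ⌋.toNat : ℝ)+1) < δ ∧ δ ≤ 1/(⌊1/δ⌋.toNat : ℝ) := by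
  obtain ⟨h0, h1⟩ := hδ
  set t := ⌊1/δ⌋.toNat with ht
  have htZ : ((t:ℕ):ℝ) = ((⌊1/δ⌋ : ℤ) : ℝ) := by
    exact_mod_cast Int.toNat_of_nonneg (by linarith [floor_pos_of_mem ⟨h0, h1⟩])
  have ht1 : (1:ℝ) ≤ (t:ℝ) := by
    rw [htZ]; exact_mod_cast floor_pos_of_mem ⟨h0, h1⟩
  have hle : ((t:ℕ):ℝ) ≤ 1/δ := by rw [htZ]; exact Int.floor_le _
  have hlt : 1/δ < ((t:ℕ):ℝ) + 1 := by rw [htZ]; exact Int.lt_floor_add_one _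
  constructor
  · rw [div_lt_iff₀ (by linarith)]
    have := (div_lt_iff₀ h0).mp hlt
    linarith
  · rw [le_div_iff₀ (by linarith)]
    have := (le_div_iff₀ h0).mp hle
    linarith

lemma Efun_le_ffun {s : ℕ} (hs : 1 ≤ s) {δ : ℝ} (hδ : δ ∈ Set.Ioo (0:ℝ) 1) :
    Efun δ ≤ ffun s δ := by
  have ht1 : 1 ≤ ⌊1/δ⌋.toNat := by
    have := floor_pos_of_mem hδ
    omega
  obtain ⟨hlo, hhi⟩ := floor_bounds hδ
  rw [Efun_eq_ffun hδ]
  rcases le_total (⌊1/δ⌋.toNat) s with h | h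
  · obtain ⟨m, hm⟩ := Nat.exists_eq_add_of_le h
    rw [hm]
    exact chain_up m ht1 (le_of_lt hlo)
  · obtain ⟨m, hm⟩ := Nat.exists_eq_add_of_le h
    rw [hm] at hhi ⊢
    exact chain_down m hs hhi

lemma ffun_affine (s : ℕ) (δ : ℝ) :
    ffun s δ = (((s:ℝ)+1) * Real.logb 2 (s:ℝ) - (s:ℝ) * Real.logb 2 ((s:ℝ)+1)) * δ
      + (Real.logb 2 ((s:ℝ)+1) - Real.logb 2 (s:ℝ)) := by
  unfold ffun; ring

theorem stmt_10 :
    (∀ x ∈ Set.Ioo (0:ℝ) 1, ∀ y ∈ Set.Ioo (0:ℝ) 1, ∀ l ∈ Set.Icc (0:ℝ) 1,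
        l * Efun x + (1 - l) * Efun y ≤ Efun (l * x + (1 - l) * y)) ∧
    (∀ s : ℕ, 1 ≤ s → ∃ a b : ℝ,
        ∀ δ ∈ Set.Icc (1 / ((s:ℝ) + 1)) (1 / (s:ℝ)), Efun δ = a * δ + b) ∧
    ContinuousOn Efun (Set.Ioo (0:ℝ) 1) := by
  have concave : ∀ x ∈ Set.Ioo (0:ℝ) 1, ∀ y ∈ Set.Ioo (0:ℝ) 1, ∀ l ∈ Set.Icc (0:ℝ) 1,
      l * Efun x + (1 - l) * Efun y ≤ Efun (l * x + (1 - l) * y) := by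
    intro x hx y hy l hl
    obtain ⟨hx0, hx1⟩ := hx
    obtain ⟨hy0, hy1⟩ := hy
    obtain ⟨hl0, hl1⟩ := hl
    have hz : l * x + (1 - l) * y ∈ Set.Ioo (0:ℝ) 1 := by
      constructor <;> rcases le_total x y with hxy | hxy <;>
        nlinarith [mul_nonneg hl0 (sub_nonneg.mpr hxy),
          mul_nonneg (by linarith : (0:ℝ) ≤ 1 - l) (sub_nonneg.mpr hxy)]
    set t := ⌊1/(l * x + (1 - l) * y)⌋.toNat with ht
    have ht1 : 1 ≤ t := by
      have := floor_pos_of_mem hz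
      omega
    have hEz : Efun (l * x + (1 - l) * y) = ffun t (l * x + (1 - l) * y) :=
      Efun_eq_ffun hz
    have hEx : Efun x ≤ ffun t x := Efun_le_ffun ht1 ⟨hx0, hx1⟩
    have hEy : Efun y ≤ ffun t y := Efun_le_ffun ht1 ⟨hy0, hy1⟩
    have haff : l * ffun t x + (1 - l) * ffun t y = ffun t (l * x + (1 - l) * y) := by
      unfold ffun; ring
    calc l * Efun x + (1 - l) * Efun y
        ≤ l * ffun t x + (1 - l) * ffun t y := by
          have := mul_le_mul_of_nonneg_left hEx hl0
          have := mul_le_mul_of_nonneg_left hEy (by linarith : (0:ℝ) ≤ 1 - l)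
          linarith
      _ = ffun t (l * x + (1 - l) * y) := haff
      _ = Efun (l * x + (1 - l) * y) := hEz.symm
  refine ⟨concave, ?_, ?_⟩
  · -- linearity on each piece
    intro s hs
    refine ⟨((s:ℝ)+1) * Real.logb 2 (s:ℝ) - (s:ℝ) * Real.logb 2 ((s:ℝ)+1),
      Real.logb 2 ((s:ℝ)+1) - Real.logb 2 (s:ℝ), ?_⟩
    intro δ hδ
    obtain ⟨hlo, hhi⟩ := hδ
    have hs1 : (1:ℝ) ≤ (s:ℝ) := by exact_mod_cast hs
    have hδ0 : 0 < δ := lt_of_lt_of_le (by positivity) hlo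
    rcases eq_or_lt_of_le hlo with heq | hlt
    · -- δ = 1/(s+1); floor of 1/δ is s+1
      have hδval : δ = 1/((s:ℝ)+1) := heq.symm
      have hinv : 1/δ = (s:ℝ)+1 := by
        rw [hδval, one_div_one_div]
      have hfloor : ⌊1/δ⌋ = (s:ℤ) + 1 := by
        rw [hinv]
        rw [show ((s:ℝ)+1) = (((s:ℤ)+1 : ℤ) : ℝ) by push_cast; ring]
        exact Int.floor_intCast _
      have : Efun δ = ffun (s+1) δ := by
        unfold Efun ffun
        rw [hfloor]
        push_cast
        ring
      rw [this]
      have hzero : ((s:ℝ)+1) * δ - 1 = 0 := by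
        rw [hδval]; field_simp; ring
      have hstep := ffun_step s δ
      rw [hzero, mul_zero] at hstep
      have : ffun (s+1) δ = ffun s δ := by linarith
      rw [this, ffun_affine]
    · -- 1/(s+1) < δ ≤ 1/s; floor of 1/δ is s
      have hfloor : ⌊1/δ⌋ = (s:ℤ) := by
        apply Int.floor_eq_iff.mpr
        constructor
        · push_cast
          rw [le_div_iff₀ hδ0]
          have := (le_div_iff₀ (by linarith : (0:ℝ) < (s:ℝ))).mp hhi
          linarith
        · push_cast
          rw [div_lt_iff₀ hδ0]
          have := (div_lt_iff₀ (by linarith : (0:ℝ) < (s:ℝ)+1)).mp hlt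
          linarith
      have : Efun δ = ffun s δ := by
        unfold Efun ffun
        rw [hfloor]
        push_cast
        ring
      rw [this, ffun_affine]
  · -- continuity from concavity
    have hconc : ConcaveOn ℝ (Set.Ioo (0:ℝ) 1) Efun := by
      refine ⟨convex_Ioo 0 1, ?_⟩
      intro x hx y hy a b ha hb hab
      have hb' : b = 1 - a := by linarith
      have := concave x hx y hy a ⟨ha, by linarith⟩
      simp only [smul_eq_mul, hb']
      exact this
    exact hconc.continuousOn isOpen_Ioo
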